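/- Let n ≥ 2, let k be a nonzero integer, and let ι ∈ Aut(F_n) be the automorphism sending every free generator x_i to x_i^{−1} (an involution). Then for every i with 1 ≤ i ≤ n−1 one has ι ∘ φ_k(σ_i) ∘ ι = φ_{−k}(σ_i); consequently, the images φ_k(B_n) and φ_{−k}(B_n) are conjugate subgroups of Aut(F_n): ι φ_k(B_n) ι^{−1} = φ_{−k}(B_n). -/

import Mathlib

/-- The defining relations of the braid group on `m + 1` strands (`m` generators
`σ_1, …, σ_m`, indexed here by `Fin m`): the commutation relations
`σ_i σ_j = σ_j σ_i` for `|i - j| > 1` and the braid relations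
`σ_i σ_{i+1} σ_i = σ_{i+1} σ_i σ_{i+1}`. -/
def braidRels (m : ℕ) : Set (FreeGroup (Fin m)) :=
  {r | (∃ i j : Fin m, (i : ℕ) + 1 < (j : ℕ) ∧
        r = FreeGroup.of i * FreeGroup.of j * (FreeGroup.of i)⁻¹ * (FreeGroup.of j)⁻¹) ∨
       (∃ i j : Fin m, (i : ℕ) + 1 = (j : ℕ) ∧
        r = FreeGroup.of i * FreeGroup.of j * FreeGroup.of i *
            (FreeGroup.of j * FreeGroup.of i * FreeGroup.of j)⁻¹)}

/-- The index in `Fin n` of the generator `x_i` of `F_n` acted on by `σ_i`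
(the strand index `i`, `0`-based). -/
def xL (n : ℕ) (i : Fin (n - 1)) : Fin n := ⟨i, by have := i.isLt; omega⟩

/-- The index in `Fin n` of the generator `x_{i+1}` of `F_n` acted on by `σ_i`. -/
def xR (n : ℕ) (i : Fin (n - 1)) : Fin n := ⟨(i : ℕ) + 1, by have := i.isLt; omega⟩
/-- For `n ≥ 2` and a nonzero integer `k`, let `ι ∈ Aut(F_n)` be the automorphism
sending every free generator `x_j` to `x_j⁻¹`. Then for every generator `σ_i` of
`B_n` one has `ι ∘ φ_k(σ_i) ∘ ι = φ_{-k}(σ_i)`, where `φ_k, φ_{-k}` are Wada's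
type (1) representations with parameters `k` and `-k`; consequently the images
`φ_k(B_n)` and `φ_{-k}(B_n)` are conjugate subgroups of `Aut(F_n)`:
`ι φ_k(B_n) ι⁻¹ = φ_{-k}(B_n)`. -/
theorem wada_type1_opposite_parameters_conjugate (n : ℕ) (hn : 2 ≤ n) (k : ℤ) (hk : k ≠ 0)
    (ι : MulAut (FreeGroup (Fin n)))
    (hι : ∀ j : Fin n, ι (FreeGroup.of j) = (FreeGroup.of j)⁻¹)
    (φk φmk : PresentedGroup (braidRels (n - 1)) →* MulAut (FreeGroup (Fin n)))
    (hφk : ∀ i : Fin (n - 1),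
      (φk (PresentedGroup.of i)) (FreeGroup.of (xL n i)) =
          FreeGroup.of (xL n i) ^ k * FreeGroup.of (xR n i) * FreeGroup.of (xL n i) ^ (-k) ∧
      (φk (PresentedGroup.of i)) (FreeGroup.of (xR n i)) = FreeGroup.of (xL n i) ∧
      ∀ j : Fin n, j ≠ xL n i → j ≠ xR n i →
        (φk (PresentedGroup.of i)) (FreeGroup.of j) = FreeGroup.of j)
    (hφmk : ∀ i : Fin (n - 1),
      (φmk (PresentedGroup.of i)) (FreeGroup.of (xL n i)) =
          FreeGroup.of (xL n i) ^ (-k) * FreeGroup.of (xR n i) * FreeGroup.of (xL n i) ^ k ∧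
      (φmk (PresentedGroup.of i)) (FreeGroup.of (xR n i)) = FreeGroup.of (xL n i) ∧
      ∀ j : Fin n, j ≠ xL n i → j ≠ xR n i →
        (φmk (PresentedGroup.of i)) (FreeGroup.of j) = FreeGroup.of j) :
    (∀ i : Fin (n - 1),
        ι * φk (PresentedGroup.of i) * ι = φmk (PresentedGroup.of i)) ∧
    Subgroup.map (MulAut.conj ι).toMonoidHom φk.range = φmk.range := by

  -- `ι` squares to the identity
  have hinv : ∀ x : FreeGroup (Fin n), ι (ι x) = x := by
    intro x
    induction x using FreeGroup.induction_on with
    | C1 => simp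
    | of j =>
      show ι (ι (FreeGroup.of j)) = FreeGroup.of j
      rw [hι, map_inv, hι, inv_inv]
    | inv_of j ih => rw [map_inv, map_inv, ih]
    | mul a b iha ihb => rw [map_mul, map_mul, iha, ihb]
  have hsq : ι * ι = 1 := by
    ext x
    simpa using hinv x
  have hιinv : ι⁻¹ = ι := by
    rw [inv_eq_of_mul_eq_one_left hsq]
  have heq : ∀ i : Fin (n - 1),
      ι * φk (PresentedGroup.of i) * ι = φmk (PresentedGroup.of i) := by
    intro i
    apply MulEquiv.toMonoidHom_injective
    apply FreeGroup.ext_hom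
    intro j
    show (ι * φk (PresentedGroup.of i) * ι) (FreeGroup.of j)
        = (φmk (PresentedGroup.of i)) (FreeGroup.of j)
    have : (ι * φk (PresentedGroup.of i) * ι) (FreeGroup.of j)
        = ι ((φk (PresentedGroup.of i)) (ι (FreeGroup.of j))) := rfl
    rw [this, hι, map_inv, map_inv]
    by_cases hL : j = xL n i
    · subst hL
      rw [(hφk i).1, (hφmk i).1]
      rw [map_mul, map_mul, map_zpow, map_zpow, hι, hι]
      group
    · by_cases hR : j = xR n i
      · subst hR
        rw [(hφk i).2.1, (hφmk i).2.1, hι, inv_inv]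
      · rw [(hφk i).2.2 j hL hR, (hφmk i).2.2 j hL hR, hι, inv_inv]
  refine ⟨heq, ?_⟩
  have hcomp : (MulAut.conj ι).toMonoidHom.comp φk = φmk := by
    apply PresentedGroup.ext
    intro i
    show MulAut.conj ι (φk (PresentedGroup.of i)) = φmk (PresentedGroup.of i)
    rw [MulAut.conj_apply, hιinv, mul_assoc, ← mul_assoc, heq i]
  rw [← MonoidHom.range_comp, hcomp]
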